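/- For all constants μ > 0, c₁ > 0, c₂ > 0, the equation ln((1-B)/(1+B)) + 2B/(1-B²) = 2μ²c₂/c₁ has exactly one solution B in the open interval (0,1). -/

import Mathlib

open Real Set

noncomputable def fB (x : ℝ) : ℝ := Real.log ((1 - x) / (1 + x)) + 2 * x / (1 - x ^ 2)

lemma fB_hasDerivAt {x : ℝ} (h1 : -1 < x) (h2 : x < 1) :
    HasDerivAt fB (4 * x ^ 2 / (1 - x ^ 2) ^ 2) x := by
  have hx1 : (0:ℝ) < 1 - x := by linarith
  have hx2 : (0:ℝ) < 1 + x := by linarith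
  have hq : (0:ℝ) < 1 - x ^ 2 := by nlinarith
  have hA : HasDerivAt (fun y : ℝ => (1 - y) / (1 + y))
      (((-1) * (1 + x) - (1 - x) * 1) / (1 + x) ^ 2) x := by
    exact HasDerivAt.div ((hasDerivAt_id x).const_sub 1)
      ((hasDerivAt_id x).const_add 1) (by positivity)
  have hlog : HasDerivAt (fun y : ℝ => Real.log ((1 - y) / (1 + y)))
      ((((-1) * (1 + x) - (1 - x) * 1) / (1 + x) ^ 2) / ((1 - x) / (1 + x))) x := by
    exact hA.log (by positivity)
  have hden : HasDerivAt (fun y : ℝ => 1 - y ^ 2) (-(2 * x)) x := by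
    simpa using ((hasDerivAt_pow 2 x).const_sub 1)
  have hB : HasDerivAt (fun y : ℝ => 2 * y / (1 - y ^ 2))
      ((2 * (1 - x ^ 2) - 2 * x * (-(2 * x))) / (1 - x ^ 2) ^ 2) x := by
    have hnum : HasDerivAt (fun y : ℝ => 2 * y) 2 x := by
      simpa using (hasDerivAt_id x).const_mul 2
    exact HasDerivAt.div hnum hden (ne_of_gt hq)
  have := hlog.add hB
  refine HasDerivAt.congr_deriv (f := fB) this ?_
  field_simp
  ring

lemma fB_strictMonoOn : StrictMonoOn fB (Ico (0:ℝ) 1) := by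
  apply strictMonoOn_of_deriv_pos (convex_Ico 0 1)
  · intro x hx
    exact (fB_hasDerivAt (by linarith [hx.1]) hx.2).continuousAt.continuousWithinAt
  · intro x hx
    rw [interior_Ico] at hx
    rw [(fB_hasDerivAt (by linarith [hx.1]) hx.2).deriv]
    have h1 : (0:ℝ) < 1 - x ^ 2 := by nlinarith [hx.1, hx.2]
    have h0 : x ≠ 0 := ne_of_gt hx.1
    positivity

lemma fB_zero : fB 0 = 0 := by simp [fB]

lemma fB_lower {m : ℝ} (hm : 8 ≤ m) : m ^ 2 / 4 ≤ fB (1 - 1 / m ^ 2) := by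
  have hm0 : (0:ℝ) < m := by linarith
  have hε : (0:ℝ) < 1 / m ^ 2 := by positivity
  have hε64 : 1 / m ^ 2 ≤ 1 / 64 := by
    rw [div_le_div_iff₀ (by positivity) (by norm_num)]
    nlinarith
  set ε : ℝ := 1 / m ^ 2 with hεdef
  have hB1 : (1:ℝ) - (1 - ε) = ε := by ring
  have hB2 : (1:ℝ) + (1 - ε) = 2 - ε := by ring
  have h2ε : (0:ℝ) < 2 - ε := by linarith
  have hsq : (1:ℝ) - (1 - ε) ^ 2 = ε * (2 - ε) := by ring
  have hlogε : 2 - 2 * m ≤ Real.log ε := by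
    have : Real.log ε = -(2 * Real.log m) := by
      rw [hεdef, one_div, Real.log_inv, Real.log_pow]
      push_cast; ring
    have hlm : Real.log m ≤ m - 1 := Real.log_le_sub_one_of_pos hm0
    linarith
  have hlog2 : Real.log (2 - ε) ≤ 1 := by
    have h1 : Real.log (2 - ε) ≤ (2 - ε) - 1 := Real.log_le_sub_one_of_pos h2ε
    linarith
  have hlogdiv : Real.log (ε / (2 - ε)) = Real.log ε - Real.log (2 - ε) :=
    Real.log_div (ne_of_gt hε) (ne_of_gt h2ε)
  have hrat : 63 / 64 * m ^ 2 ≤ 2 * (1 - ε) / (ε * (2 - ε)) := by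
    rw [le_div_iff₀ (by positivity)]
    have hεm : ε * m ^ 2 = 1 := by
      rw [hεdef]; field_simp
    nlinarith [sq_nonneg ε, sq_nonneg m]
  have : fB (1 - ε) = Real.log (ε / (2 - ε)) + 2 * (1 - ε) / (ε * (2 - ε)) := by
    unfold fB
    rw [hB1, hB2, hsq]
  rw [this, hlogdiv]
  nlinarith

theorem eqB_existsUnique (μ c₁ c₂ : ℝ) (hμ : 0 < μ) (hc₁ : 0 < c₁) (hc₂ : 0 < c₂) :
    ∃! B : ℝ, B ∈ Set.Ioo (0 : ℝ) 1 ∧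
      Real.log ((1 - B) / (1 + B)) + 2 * B / (1 - B ^ 2) = 2 * μ ^ 2 * c₂ / c₁ := by
  set K : ℝ := 2 * μ ^ 2 * c₂ / c₁ with hKdef
  have hK : 0 < K := by positivity
  set m : ℝ := max 8 (2 * Real.sqrt K) with hmdef
  have hm8 : (8:ℝ) ≤ m := le_max_left _ _
  have hm0 : (0:ℝ) < m := by linarith
  have hmK : K ≤ m ^ 2 / 4 := by
    have h1 : 2 * Real.sqrt K ≤ m := le_max_right _ _
    have h2 : Real.sqrt K ^ 2 = K := Real.sq_sqrt hK.le
    nlinarith [Real.sqrt_nonneg K]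
  set B₀ : ℝ := 1 - 1 / m ^ 2 with hB₀def
  have hB₀0 : (0:ℝ) < B₀ := by
    have : 1 / m ^ 2 ≤ 1 / 64 := by
      rw [div_le_div_iff₀ (by positivity) (by norm_num)]
      nlinarith
    simp only [hB₀def]; linarith
  have hB₀1 : B₀ < 1 := by
    have : (0:ℝ) < 1 / m ^ 2 := by positivity
    simp only [hB₀def]; linarith
  have hcont : ContinuousOn fB (Icc 0 B₀) := by
    intro x hx
    exact (fB_hasDerivAt (by linarith [hx.1]) (by linarith [hx.2])).continuousAt.continuousWithinAt
  have hKmem : K ∈ Icc (fB 0) (fB B₀) := by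
    constructor
    · rw [fB_zero]; exact hK.le
    · exact le_trans hmK (fB_lower hm8)
  obtain ⟨B, hBmem, hBeq⟩ := intermediate_value_Icc hB₀0.le hcont hKmem
  have hB0 : 0 < B := by
    rcases eq_or_lt_of_le hBmem.1 with h | h
    · exfalso; rw [← h, fB_zero] at hBeq; linarith
    · exact h
  have hB1 : B < 1 := lt_of_le_of_lt hBmem.2 hB₀1
  refine ⟨B, ⟨⟨hB0, hB1⟩, hBeq⟩, ?_⟩
  rintro y ⟨⟨hy0, hy1⟩, hyeq⟩
  have h1 : fB y = fB B := by
    show Real.log ((1 - y) / (1 + y)) + 2 * y / (1 - y ^ 2) = fB B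
    rw [hyeq, ← hBeq]
  exact fB_strictMonoOn.injOn ⟨hy0.le, hy1⟩ ⟨hB0.le, hB1⟩ h1
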